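/- arXiv:1004.1050 — 13 statements merged into one kernel-verified Lean document; each statement's English description precedes it below -/
import Mathlib

section
/- If E is a nil evolution algebra with natural basis e_1,...,e_n and structure matrix A=(a_{ij}) (meaning e_i·e_i = Σ_k a_{ik}e_k and e_i·e_j = 0 for i≠j), then every diagonal entry vanishes: a_{ii} = 0 for all i. -/
/-- Right-normed powers: `rnpow x k` is the right-normed power `x^{k+1}`,
i.e. `rnpow x 0 = x` and `rnpow x (k+1) = (rnpow x k) * x`. -/
def rnpow {E : Type*} [Mul E] (x : E) : ℕ → E
  | 0 => x
  | k + 1 => rnpow x k * x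

/-- If `E` is a nil evolution algebra with natural basis `e₁,…,eₙ` and structure
matrix `A = (a i j)`, then all diagonal entries of `A` vanish. -/
theorem stmt0 {K : Type*} [Field K] {E : Type*} [NonUnitalNonAssocRing E]
    [Module K E] [SMulCommClass K E E] [IsScalarTower K E E]
    {n : ℕ} (b : Module.Basis (Fin n) K E) (a : Matrix (Fin n) (Fin n) K)
    (hmul0 : ∀ i j, i ≠ j → b i * b j = 0)
    (hsq : ∀ i, b i * b i = ∑ k, a i k • b k)
    (hnil : ∀ x : E, ∃ m : ℕ, rnpow x (m + 1) = 0) :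
    ∀ i, a i i = 0 := by
  intro i
  have key : ∀ m : ℕ, rnpow (b i) (m + 1) = (a i i) ^ m • (b i * b i) := by
    intro m
    induction m with
    | zero => simp [rnpow]
    | succ m ih =>
      have step : (b i * b i) * b i = a i i • (b i * b i) := by
        rw [hsq i, Finset.sum_mul]
        rw [Finset.sum_eq_single i]
        · rw [smul_mul_assoc, hsq i]
        · intro k _ hk
          rw [smul_mul_assoc, hmul0 k i hk, smul_zero]
        · simp
      calc rnpow (b i) (m + 2) = rnpow (b i) (m + 1) * b i := rfl
        _ = ((a i i) ^ m • (b i * b i)) * b i := by rw [ih]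
        _ = (a i i) ^ m • ((b i * b i) * b i) := by rw [smul_mul_assoc]
        _ = (a i i) ^ (m + 1) • (b i * b i) := by
            rw [step, smul_smul, pow_succ]
  obtain ⟨m, hm⟩ := hnil (b i)
  rw [key m, hsq i, Finset.smul_sum] at hm
  have := b.linearIndependent
  have h0 : (a i i) ^ m * a i i = 0 := by
    have : ∑ k, ((a i i) ^ m * a i k) • b k = 0 := by
      simpa [smul_smul] using hm
    have hcoef := Fintype.linearIndependent_iff.mp b.linearIndependent _ this i
    simpa using hcoef
  have : (a i i) ^ (m + 1) = 0 := by rw [pow_succ]; exact h0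
  exact (pow_eq_zero_iff'.mp this).1
end

section
/- If E is a nil evolution algebra with structure matrix A = (a_{ij}), then for any two distinct indices i, j one has a_{ij} a_{ji} = 0. -/
section Aux

variable {E : Type*} [NonUnitalNonAssocRing E]
    [Module ℂ E] [SMulCommClass ℂ E E] [IsScalarTower ℂ E E]
    {n : ℕ} (b : Module.Basis (Fin n) ℂ E)

lemma aux_sum_mul (hmul0 : ∀ i j, i ≠ j → b i * b j = 0)
    (c : Fin n → ℂ) (i : Fin n) :
    (∑ k, c k • b k) * b i = c i • (b i * b i) := by
  rw [Finset.sum_mul, Finset.sum_eq_single i]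
  · rw [smul_mul_assoc]
  · intro k _ hk
    rw [smul_mul_assoc, hmul0 k i hk, smul_zero]
  · intro h; exact absurd (Finset.mem_univ i) h

lemma aux_coeff_zero (c : Fin n → ℂ) (h : (∑ k, c k • b k) = 0) (i : Fin n) :
    c i = 0 :=
  (Fintype.linearIndependent_iff.mp b.linearIndependent) c h i

lemma aux_diag_zero (a : Matrix (Fin n) (Fin n) ℂ)
    (hmul0 : ∀ i j, i ≠ j → b i * b j = 0)
    (hsq : ∀ i, b i * b i = ∑ k, a i k • b k)
    (hnil : ∀ x : E, ∃ m : ℕ, rnpow x (m + 1) = 0) (i : Fin n) :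
    a i i = 0 := by
  have key : ∀ m : ℕ, rnpow (b i) (m + 1) = (a i i) ^ m • (b i * b i) := by
    intro m
    induction m with
    | zero => simp [rnpow]
    | succ m ih =>
      rw [rnpow, ih, smul_mul_assoc]
      have : (b i * b i) * b i = a i i • (b i * b i) := by
        conv_lhs => rw [hsq i]
        rw [aux_sum_mul b hmul0]
      rw [this, smul_smul, pow_succ]
  obtain ⟨m, hm⟩ := hnil (b i)
  rw [key m] at hm
  rcases smul_eq_zero.mp hm with h | h
  · exact (pow_eq_zero_iff'.mp h).1
  · rw [hsq i] at h
    exact aux_coeff_zero b _ h i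

end Aux

/-- If `E` is a nil evolution algebra (over ℂ) with structure matrix `A = (a i j)`,
then for distinct indices `i ≠ j` one has `a i j * a j i = 0`. -/
theorem stmt1 {E : Type*} [NonUnitalNonAssocRing E]
    [Module ℂ E] [SMulCommClass ℂ E E] [IsScalarTower ℂ E E]
    {n : ℕ} (b : Module.Basis (Fin n) ℂ E) (a : Matrix (Fin n) (Fin n) ℂ)
    (hmul0 : ∀ i j, i ≠ j → b i * b j = 0)
    (hsq : ∀ i, b i * b i = ∑ k, a i k • b k)
    (hnil : ∀ x : E, ∃ m : ℕ, rnpow x (m + 1) = 0) :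
    ∀ i j, i ≠ j → a i j * a j i = 0 := by
  intro i j hij
  have hdiag : ∀ i, a i i = 0 := aux_diag_zero b a hmul0 hsq hnil
  set c : ℂ := a i j * a j i with hc
  set x : E := b i + b j with hx
  set s : E := b i * b i + b j * b j with hs
  set u : E := a j i • (b i * b i) + a i j • (b j * b j) with hu
  -- basic single products
  have hii_i : (b i * b i) * b i = 0 := by
    conv_lhs => rw [hsq i]
    rw [aux_sum_mul b hmul0, hdiag i, zero_smul]
  have hjj_j : (b j * b j) * b j = 0 := by
    conv_lhs => rw [hsq j]
    rw [aux_sum_mul b hmul0, hdiag j, zero_smul]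
  have hii_j : (b i * b i) * b j = a i j • (b j * b j) := by
    conv_lhs => rw [hsq i]
    rw [aux_sum_mul b hmul0]
  have hjj_i : (b j * b j) * b i = a j i • (b i * b i) := by
    conv_lhs => rw [hsq j]
    rw [aux_sum_mul b hmul0]
  have hx1 : rnpow x 1 = s := by
    show x * x = s
    rw [hx, hs, add_mul, mul_add, mul_add, hmul0 i j hij, hmul0 j i hij.symm]
    abel
  have hsx : s * x = u := by
    rw [hs, hx, hu, add_mul, mul_add, mul_add, hii_i, hii_j, hjj_i, hjj_j]
    abel
  have hux : u * x = c • s := by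
    rw [hu, hx, add_mul, smul_mul_assoc, smul_mul_assoc, mul_add, mul_add,
      hii_i, hii_j, hjj_i, hjj_j, hs, hc]
    rw [zero_add, add_zero, smul_smul, smul_smul,
      mul_comm (a j i) (a i j), smul_add]
    abel
  have key : ∀ k : ℕ, rnpow x (2 * k + 1) = c ^ k • s ∧
      rnpow x (2 * k + 2) = c ^ k • u := by
    intro k
    induction k with
    | zero =>
      refine ⟨by simpa using hx1, ?_⟩
      show rnpow x 1 * x = (1 : ℂ) • u
      rw [hx1, hsx, one_smul]
    | succ k ih =>
      have h1 : rnpow x (2 * (k + 1) + 1) = c ^ (k + 1) • s := by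
        have : 2 * (k + 1) + 1 = (2 * k + 2) + 1 := by ring
        rw [this, rnpow, ih.2, smul_mul_assoc, hux, smul_smul, pow_succ]
      refine ⟨h1, ?_⟩
      show rnpow x (2 * (k + 1) + 1) * x = c ^ (k + 1) • u
      rw [h1, smul_mul_assoc, hsx]
  -- coefficient extraction targets
  have hs_sum : s = ∑ k, (a i k + a j k) • b k := by
    rw [hs, hsq i, hsq j, ← Finset.sum_add_distrib]
    simp [add_smul]
  have hu_sum : u = ∑ k, (a j i * a i k + a i j * a j k) • b k := by
    rw [hu, hsq i, hsq j, Finset.smul_sum, Finset.smul_sum, ← Finset.sum_add_distrib]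
    simp [add_smul, smul_smul]
  have hs0 : s = 0 → c = 0 := by
    intro h
    rw [hs_sum] at h
    have h2 := aux_coeff_zero b _ h j
    rw [hdiag j, add_zero] at h2
    rw [hc, h2, zero_mul]
  have hu0 : u = 0 → c = 0 := by
    intro h
    rw [hu_sum] at h
    have h2 := aux_coeff_zero b _ h j
    rw [hdiag j, mul_zero, add_zero] at h2
    rw [hc, mul_comm]; exact h2
  obtain ⟨m, hm⟩ := hnil x
  rcases Nat.even_or_odd m with ⟨k, hk⟩ | ⟨k, hk⟩
  · -- m = 2k, so rnpow x (2k+1) = 0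
    have : c ^ k • s = 0 := by
      rw [← (key k).1, ← hm]; congr 1; omega
    rcases smul_eq_zero.mp this with h | h
    · exact (pow_eq_zero_iff'.mp h).1
    · exact hs0 h
  · have : c ^ k • u = 0 := by
      rw [← (key k).2, ← hm]; congr 1; omega
    rcases smul_eq_zero.mp this with h | h
    · exact (pow_eq_zero_iff'.mp h).1
    · exact hu0 h
end

section
/- In an evolution algebra with structure matrix A and basis e_1,...,e_n, for distinct indices i,j the right-normed even powers of e_i+e_j satisfy (e_i+e_j)^{2s} = (a_{ij} a_{ji})^{s-1} (e_i+e_j)^2 for all s ≥ 1, provided a_{ii} = a_{jj} = 0. -/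
/-- In an evolution algebra, for distinct `i, j` with `a i i = a j j = 0`,
the right-normed even powers satisfy
`(eᵢ+eⱼ)^{2s} = (a i j * a j i)^{s-1} • (eᵢ+eⱼ)²` for all `s ≥ 1`. -/
theorem stmt2 {K : Type*} [Field K] {E : Type*} [NonUnitalNonAssocRing E]
    [Module K E] [SMulCommClass K E E] [IsScalarTower K E E]
    {n : ℕ} (b : Module.Basis (Fin n) K E) (a : Matrix (Fin n) (Fin n) K)
    (hmul0 : ∀ i j, i ≠ j → b i * b j = 0)
    (hsq : ∀ i, b i * b i = ∑ k, a i k • b k)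
    (i j : Fin n) (hij : i ≠ j) (hi : a i i = 0) (hj : a j j = 0) :
    ∀ s : ℕ, 1 ≤ s →
      rnpow (b i + b j) (2 * s - 1) =
        (a i j * a j i) ^ (s - 1) • rnpow (b i + b j) 1 := by
  set x := b i + b j with hx
  have hsqmul : ∀ k l : Fin n, (b k * b k) * b l = a k l • (b l * b l) := by
    intro k l
    rw [hsq k, Finset.sum_mul]
    rw [Finset.sum_eq_single l]
    · rw [smul_mul_assoc]
    · intro m _ hm
      rw [smul_mul_assoc, hmul0 m l hm, smul_zero]
    · intro h; exact absurd (Finset.mem_univ l) h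
  have hx2 : rnpow x 1 = b i * b i + b j * b j := by
    show x * x = _
    rw [hx, add_mul, mul_add, mul_add, hmul0 i j hij, hmul0 j i hij.symm]
    abel
  have hx3 : rnpow x 1 * x = a j i • (b i * b i) + a i j • (b j * b j) := by
    rw [hx2, add_mul, mul_add, mul_add, hsqmul i i, hsqmul i j, hsqmul j i, hsqmul j j,
      hi, hj, zero_smul, zero_smul]
    abel
  have hkey : (rnpow x 1 * x) * x = (a i j * a j i) • rnpow x 1 := by
    rw [hx3, add_mul, smul_mul_assoc, smul_mul_assoc, mul_add, mul_add,
      hsqmul i i, hsqmul i j, hsqmul j i, hsqmul j j, hi, hj, zero_smul, zero_smul,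
      add_zero, zero_add, smul_smul, smul_smul, hx2, smul_add,
      mul_comm (a j i) (a i j)]
    abel
  have main : ∀ t : ℕ, rnpow x (2 * t + 1) = (a i j * a j i) ^ t • rnpow x 1 := by
    intro t
    induction t with
    | zero => simp
    | succ t ih =>
      have : 2 * (t + 1) + 1 = (2 * t + 1) + 1 + 1 := by ring
      rw [this]
      show (rnpow x (2 * t + 1) * x) * x = _
      rw [ih, smul_mul_assoc, smul_mul_assoc, hkey, smul_smul, pow_succ]
  intro s hs
  obtain ⟨t, rfl⟩ := Nat.exists_eq_add_of_le hs
  have h1 : 2 * (1 + t) - 1 = 2 * t + 1 := by omega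
  have h2 : 1 + t - 1 = t := by omega
  rw [h1, h2, main t]
end

section
/- Let E be a nil evolution algebra with structure matrix A = (a_{ij}) of size n. Then for every k ∈ {1,...,n} and every tuple of pairwise distinct indices i_1, ..., i_k ∈ {1,...,n}, the cyclic product a_{i_1 i_2} a_{i_2 i_3} ⋯ a_{i_k i_1} equals 0. -/
/-- If `E` is a nil evolution algebra over ℂ with structure matrix `A`, then
every cyclic product `a_{i₁i₂} a_{i₂i₃} ⋯ a_{iₖi₁}` over pairwise distinct
indices vanishes.  (The tuple is `i : Fin (k+1) → Fin n`, injective, and the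
product is taken cyclically.) -/
theorem stmt3 {E : Type*} [NonUnitalNonAssocRing E]
    [Module ℂ E] [SMulCommClass ℂ E E] [IsScalarTower ℂ E E]
    {n : ℕ} (b : Module.Basis (Fin n) ℂ E) (a : Matrix (Fin n) (Fin n) ℂ)
    (hmul0 : ∀ i j, i ≠ j → b i * b j = 0)
    (hsq : ∀ i, b i * b i = ∑ k, a i k • b k)
    (hnil : ∀ x : E, ∃ m : ℕ, rnpow x (m + 1) = 0) :
    ∀ (k : ℕ) (i : Fin (k + 1) → Fin n), Function.Injective i →
      ∏ m : Fin (k + 1), a (i m) (i (m + 1)) = 0 := by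
  intro k
  induction k using Nat.strong_induction_on with
  | _ k IH =>
  intro i hi
  by_contra hP
  have hα : ∀ m : Fin (k+1), a (i m) (i (m+1)) ≠ 0 := by
    intro m hm
    exact hP (Finset.prod_eq_zero (Finset.mem_univ m) hm)
  -- chords vanish
  open Fin.NatCast in
  have hchord : ∀ j l : Fin (k+1), l ≠ j + 1 → a (i j) (i l) = 0 := by
    intro j l hjl
    by_contra hc
    set d : ℕ := (j - l).val with hd
    have hdlt : d < k + 1 := (j - l).isLt
    have hjld : l + (d : Fin (k+1)) = j := by
      rw [hd, Fin.cast_val_eq_self]; exact add_sub_cancel l j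
    have hk10 : (k : Fin (k+1)) + 1 = 0 := by
      have := Fin.natCast_self (k+1); push_cast at this; exact this
    have hdk : d ≠ k := by
      intro h
      apply hjl
      rw [← hjld, h, add_assoc, hk10, add_zero]
    have hdk' : d < k := lt_of_le_of_ne (by omega) hdk
    -- the shorter cycle
    set c : Fin (d+1) → Fin n := fun r =>
      if (r : ℕ) = 0 then i j else i (l + ((r : ℕ) - 1 : ℕ)) with hcdef
    have hcast : ∀ s : ℕ, s ≤ d → (((s : Fin (k+1))) : ℕ) = s := by
      intro s hs; rw [Fin.val_natCast]; exact Nat.mod_eq_of_lt (by omega)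
    have harc : ∀ s₁ s₂ : ℕ, s₁ ≤ d → s₂ ≤ d →
        l + (s₁ : Fin (k+1)) = l + (s₂ : Fin (k+1)) → s₁ = s₂ := by
      intro s₁ s₂ h1 h2 h
      have := add_left_cancel h
      have := congrArg Fin.val this
      rwa [hcast s₁ h1, hcast s₂ h2] at this
    have hcinj : Function.Injective c := by
      intro r₁ r₂ h
      simp only [hcdef] at h
      rcases Nat.eq_zero_or_pos (r₁ : ℕ) with h1 | h1 <;>
        rcases Nat.eq_zero_or_pos (r₂ : ℕ) with h2 | h2
      · exact Fin.ext (h1.trans h2.symm)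
      · exfalso
        rw [if_pos h1, if_neg (by omega)] at h
        have hj := hi h
        have : ((r₂ : ℕ) - 1 : ℕ) = d := by
          apply harc _ _ (by omega) le_rfl
          rw [hjld]; exact hj.symm
        omega
      · exfalso
        rw [if_neg (by omega), if_pos h2] at h
        have hj := hi h
        have : ((r₁ : ℕ) - 1 : ℕ) = d := by
          apply harc _ _ (by omega) le_rfl
          rw [hjld]; exact hj
        omega
      · rw [if_neg (by omega), if_neg (by omega)] at h
        have := harc _ _ (by omega) (by omega) (hi h)
        exact Fin.ext (by omega)
    -- all factors of the shorter cycle are nonzero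
    have hfac : ∀ r : Fin (d+1), a (c r) (c (r + 1)) ≠ 0 := by
      intro r
      have hr1 : ((r + 1 : Fin (d+1)) : ℕ) = if (r : ℕ) = d then 0 else (r : ℕ) + 1 := by
        rcases eq_or_ne ((r : ℕ)) d with h | h
        · rw [if_pos h, Fin.val_add_one, if_pos (Fin.ext (by simp [h]))]
        · rw [if_neg h, Fin.val_add_one, if_neg (fun hh => h (by rw [hh]; simp))]
      rcases eq_or_ne ((r : ℕ)) d with h | h
      · rcases Nat.eq_zero_or_pos d with hd0 | hd0
        · -- d = 0 : loop
          have hjeql : j = l := by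
            have : j - l = 0 := by
              have : ((j - l : Fin (k+1)) : ℕ) = 0 := by rw [← hd, hd0]
              exact Fin.ext this
            have := sub_eq_zero.mp this; exact this
          have : c r = i j ∧ c (r+1) = i j := by
            constructor
            · simp only [hcdef, h, hd0, if_pos]
            · simp only [hcdef]; rw [if_pos (by rw [hr1]; simp [h])]
          rw [this.1, this.2]
          rw [hjeql] at hc ⊢
          exact hc
        · -- last edge: c r = i (l + (d-1)), c (r+1) = i j = i ((l + (d-1)) + 1)
          have hcr : c r = i (l + ((d - 1 : ℕ) : Fin (k+1))) := by
            simp only [hcdef]; rw [if_neg (by omega), h]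
          have hcr1 : c (r+1) = i j := by
            simp only [hcdef]; rw [if_pos (by rw [hr1]; simp [h])]
          rw [hcr, hcr1]
          have hstep : l + ((d - 1 : ℕ) : Fin (k+1)) + 1 = j := by
            rw [← hjld]
            have : ((d - 1 : ℕ) : Fin (k+1)) + 1 = (d : Fin (k+1)) := by
              have : ((d - 1 : ℕ) + 1 : ℕ) = d := by omega
              rw [← this]; push_cast; ring
            rw [add_assoc, this]
          rw [← hstep]
          exact hα _
      · -- inner edges
        have hr1' : ((r + 1 : Fin (d+1)) : ℕ) = (r : ℕ) + 1 := by rw [hr1, if_neg h]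
        rcases Nat.eq_zero_or_pos ((r : ℕ)) with h0 | h0
        · -- chord edge from i j to i l
          have hd0 : 0 < d := by omega
          have hcr : c r = i j := by simp only [hcdef]; rw [if_pos h0]
          have hcr1 : c (r+1) = i l := by
            simp only [hcdef]; rw [if_neg (by omega)]
            rw [hr1', h0]
            norm_num
          rw [hcr, hcr1]; exact hc
        · have hcr : c r = i (l + (((r : ℕ) - 1 : ℕ) : Fin (k+1))) := by
            simp only [hcdef]; rw [if_neg (by omega)]
          have hcr1 : c (r+1) = i (l + (((r : ℕ) : ℕ) : Fin (k+1))) := by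
            simp only [hcdef]; rw [if_neg (by omega), hr1']
            norm_num
          rw [hcr, hcr1]
          have hstep : l + (((r : ℕ) - 1 : ℕ) : Fin (k+1)) + 1
              = l + (((r : ℕ)) : Fin (k+1)) := by
            have : (((r : ℕ) - 1 : ℕ) + 1 : ℕ) = (r : ℕ) := by omega
            rw [add_assoc]
            congr 1
            rw [← this]; push_cast; ring
          rw [← hstep]
          exact hα _
    have h0 : ∏ r : Fin (d+1), a (c r) (c (r + 1)) = 0 := IH d hdk' c hcinj
    exact (Finset.prod_ne_zero_iff.mpr fun r _ => hfac r) h0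
  -- the witness element
  set x : E := ∑ m : Fin (k+1), b (i m) with hx
  -- multiplication formula
  have hmulx : ∀ y : E, y * x = ∑ m : Fin (k+1), b.repr y (i m) • (∑ p, a (i m) p • b p) := by
    intro y
    calc y * x = (∑ j, b.repr y j • b j) * (∑ m : Fin (k+1), b (i m)) := by rw [b.sum_repr]
      _ = ∑ m : Fin (k+1), ∑ j, b.repr y j • (b j * b (i m)) := by
          simp only [Finset.sum_mul, Finset.mul_sum, smul_mul_assoc, Finset.smul_sum]
      _ = ∑ m : Fin (k+1), b.repr y (i m) • (b (i m) * b (i m)) := by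
          refine Finset.sum_congr rfl fun m _ => Finset.sum_eq_single (i m)
            (fun j _ hj => by rw [hmul0 j (i m) hj, smul_zero])
            (fun h => absurd (Finset.mem_univ _) h)
      _ = ∑ m : Fin (k+1), b.repr y (i m) • (∑ p, a (i m) p • b p) := by
          simp only [hsq]
  -- coordinate formula
  have hcoord : ∀ (y : E) (l : Fin (k+1)),
      b.repr (y * x) (i l) = b.repr y (i (l - 1)) * a (i (l - 1)) (i l) := by
    intro y l
    rw [hmulx y]
    have : b.repr (∑ m : Fin (k+1), b.repr y (i m) • (∑ p, a (i m) p • b p)) (i l)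
        = ∑ m : Fin (k+1), b.repr y (i m) * a (i m) (i l) := by
      rw [map_sum, Finsupp.coe_finset_sum, Finset.sum_apply]
      refine Finset.sum_congr rfl fun m _ => ?_
      rw [map_smul, Finsupp.smul_apply, map_sum, Finsupp.coe_finset_sum, Finset.sum_apply]
      have : ∑ p, (b.repr (a (i m) p • b p)) (i l) = a (i m) (i l) := by
        simp only [map_smul, Finsupp.smul_apply, Module.Basis.repr_self, Finsupp.single_apply,
          smul_eq_mul, mul_ite, mul_one, mul_zero]
        simp [Finset.sum_ite_eq', Finset.sum_ite_eq]
      rw [this, smul_eq_mul]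
    rw [this]
    refine Finset.sum_eq_single (l - 1) ?_ (fun h => absurd (Finset.mem_univ _) h)
    intro m _ hm
    rw [hchord m l (fun h => hm (by rw [h]; abel)), mul_zero]
  -- the coordinates never vanish
  have hrep : ∀ (r : ℕ) (l : Fin (k+1)), b.repr (rnpow x r) (i l) ≠ 0 := by
    intro r
    induction r with
    | zero =>
      intro l
      show b.repr x (i l) ≠ 0
      rw [hx, map_sum, Finsupp.coe_finset_sum, Finset.sum_apply]
      have : ∑ m : Fin (k+1), (b.repr (b (i m))) (i l) = 1 := by
        simp only [Module.Basis.repr_self, Finsupp.single_apply, hi.eq_iff]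
        simp [Finset.sum_ite_eq', Finset.sum_ite_eq]
      rw [this]
      exact one_ne_zero
    | succ r hr =>
      intro l
      show b.repr (rnpow x r * x) (i l) ≠ 0
      rw [hcoord]
      refine mul_ne_zero (hr (l - 1)) ?_
      have h1 : (l - 1) + 1 = l := by abel
      simpa only [h1] using hα (l - 1)
  obtain ⟨m, hm⟩ := hnil x
  exact hrep (m + 1) 0 (by rw [hm]; simp)
end

section
/- Let A be an n×n matrix over a field such that for every k and every tuple of pairwise distinct indices i_1,...,i_k the cyclic product a_{i_1 i_2} a_{i_2 i_3} ⋯ a_{i_k i_1} vanishes (in particular all a_{ii} = 0). Then A has a row consisting entirely of zeros. -/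
/-- If every cyclic product of entries of an `n×n` matrix `A` over pairwise
distinct indices vanishes (in particular all diagonal entries are `0`),
then `A` has a row consisting entirely of zeros. -/
theorem stmt4 {K : Type*} [Field K] {n : ℕ} (hn : 0 < n)
    (A : Matrix (Fin n) (Fin n) K)
    (hcyc : ∀ (k : ℕ) (i : Fin (k + 1) → Fin n), Function.Injective i →
      ∏ m : Fin (k + 1), A (i m) (i (m + 1)) = 0) :
    ∃ r : Fin n, ∀ j : Fin n, A r j = 0 := by
  by_contra h
  push_neg at h
  choose f hf using h
  -- find a periodic point of f
  obtain ⟨x⟩ : Nonempty (Fin n) := ⟨⟨0, hn⟩⟩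
  obtain ⟨a, b, hab, heq⟩ := Finite.exists_ne_map_eq_of_infinite (fun m : ℕ => f^[m] x)
  wlog hlt : a < b generalizing a b
  · exact this b a hab.symm heq.symm (hab.lt_or_gt.resolve_left hlt)
  set y := f^[a] x with hy
  have hper : Function.IsPeriodicPt f (b - a) y := by
    show f^[b - a] y = y
    rw [hy, ← Function.iterate_add_apply, Nat.sub_add_cancel hlt.le]
    exact heq.symm
  have hppos : 0 < Function.minimalPeriod f y :=
    hper.minimalPeriod_pos (Nat.sub_pos_of_lt hlt)
  set p := Function.minimalPeriod f y with hp
  obtain ⟨k, hk⟩ : ∃ k, p = k + 1 := ⟨p - 1, (Nat.succ_pred_eq_of_pos hppos).symm⟩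
  set i : Fin (k + 1) → Fin n := fun m => f^[m.val] y with hi
  have hinj : Function.Injective i := by
    intro m m' hmm
    have := Function.iterate_injOn_Iio_minimalPeriod (f := f) (x := y)
      (by simp [← hp, hk, m.isLt] : (m.val : ℕ) ∈ Set.Iio p)
      (by simp [← hp, hk, m'.isLt] : (m'.val : ℕ) ∈ Set.Iio p) hmm
    exact Fin.ext this
  have := hcyc k i hinj
  have hne : ∀ m : Fin (k + 1), A (i m) (i (m + 1)) ≠ 0 := by
    intro m
    have h1 : i (m + 1) = f (f^[m.val] y) := by
      have : ((m + 1 : Fin (k + 1)).val : ℕ) = (m.val + 1) % p := by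
        simp [Fin.add_def, hk]
      rw [hi]
      simp only [this]
      rw [hp, Function.iterate_mod_minimalPeriod_eq, Function.iterate_succ_apply']
    rw [h1]
    exact hf (f^[m.val] y)
  exact (Finset.prod_ne_zero_iff.mpr fun m _ => hne m) this
end

section
/- Let A be an n×n matrix over a field such that every cyclic product a_{i_1 i_2} a_{i_2 i_3} ⋯ a_{i_k i_1} over pairwise distinct indices vanishes. Then for each j ∈ {1,...,n} there exists a row π_j of A containing at least j zero entries, and these rows can be chosen pairwise distinct (π_{j_1} ≠ π_{j_2} for j_1 ≠ j_2). -/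
open scoped Classical

private lemma sink_exists {K : Type*} [Field K] {n : ℕ}
    (A : Matrix (Fin n) (Fin n) K)
    (hcyc : ∀ (k : ℕ) (i : Fin (k + 1) → Fin n), Function.Injective i →
      ∏ m : Fin (k + 1), A (i m) (i (m + 1)) = 0)
    (s : Finset (Fin n)) (hs : s.Nonempty) :
    ∃ v ∈ s, ∀ w ∈ s, A v w = 0 := by
  by_contra hcon
  push_neg at hcon
  set nxt : Fin n → Fin n := fun v =>
    if h : ∃ w ∈ s, A v w ≠ 0 then h.choose else v with hnxtdef
  have hnxt : ∀ v ∈ s, nxt v ∈ s ∧ A v (nxt v) ≠ 0 := by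
    intro v hv
    have h : ∃ w ∈ s, A v w ≠ 0 := hcon v hv
    simp only [hnxtdef, dif_pos h]
    exact ⟨h.choose_spec.1, h.choose_spec.2⟩
  set q : ℕ → Fin n := fun k => nxt^[k] hs.choose with hqdef
  have hq : ∀ k, q k ∈ s := by
    intro k
    induction k with
    | zero => exact hs.choose_spec
    | succ k ih =>
      have h : q (k+1) = nxt (q k) := Function.iterate_succ_apply' _ _ _
      rw [h]; exact (hnxt _ ih).1
  have hedge : ∀ k, A (q k) (q (k+1)) ≠ 0 := by
    intro k
    have h : q (k+1) = nxt (q k) := Function.iterate_succ_apply' _ _ _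
    rw [h]; exact (hnxt _ (hq k)).2
  have hP : ∃ b, ∃ a, a < b ∧ q a = q b := by
    have hcard : Fintype.card (Fin n) < Fintype.card (Fin (n+1)) := by simp
    obtain ⟨x, y, hxy, hfeq⟩ :=
      Fintype.exists_ne_map_eq_of_card_lt (fun t : Fin (n+1) => q t.val) hcard
    have hxy' : (x:ℕ) ≠ y := fun h => hxy (Fin.ext h)
    rcases lt_or_gt_of_ne hxy' with h | h
    · exact ⟨y, x, h, hfeq⟩
    · exact ⟨x, y, h, hfeq.symm⟩
  set b := Nat.find hP with hbdef
  obtain ⟨a, hab, hqab⟩ := Nat.find_spec hP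
  have hmin : ∀ c, c < b → ¬ ∃ a', a' < c ∧ q a' = q c := fun c hc => Nat.find_min hP hc
  set k := b - a - 1 with hkdef
  have hk1 : k + 1 = b - a := by omega
  set i : Fin (k+1) → Fin n := fun t => q (a + t.val) with hidef
  have hinj : Function.Injective i := by
    intro t1 t2 h
    by_contra hne
    have hne' : (t1:ℕ) ≠ t2 := fun h' => hne (Fin.ext h')
    have ht1 := t1.isLt
    have ht2 := t2.isLt
    rcases Nat.lt_or_ge t1.val t2.val with hlt | hge
    · exact hmin (a + t2.val) (by omega) ⟨a + t1.val, by omega, h⟩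
    · have hlt : (t2:ℕ) < t1 := by omega
      exact hmin (a + t1.val) (by omega) ⟨a + t2.val, by omega, h.symm⟩
  have hzero := hcyc k i hinj
  have hprodne : ∏ m : Fin (k+1), A (i m) (i (m+1)) ≠ 0 := by
    rw [Finset.prod_ne_zero_iff]
    intro m _
    rcases eq_or_ne m (Fin.last k) with hm | hm
    · have hval : ((m+1 : Fin (k+1)) : ℕ) = 0 := by
        subst hm
        simp [Fin.last_add_one]
      have h0 : i (m+1) = q a := by
        simp only [hidef]
        rw [hval, Nat.add_zero]
      have hb1 : a + (m:ℕ) = b - 1 := by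
        subst hm; simp only [Fin.val_last]; omega
      have him : i m = q (b-1) := by
        simp only [hidef]; rw [hb1]
      rw [h0, hqab, him]
      have he := hedge (b-1)
      rwa [show b - 1 + 1 = b from by omega] at he
    · have hval : ((m+1 : Fin (k+1)) : ℕ) = (m:ℕ) + 1 := by
        rw [Fin.val_add_one]
        simp [hm]
      have h1 : i (m+1) = q (a + ((m:ℕ)+1)) := by
        simp only [hidef]; rw [hval]
      rw [h1]
      have h2 : a + ((m:ℕ)+1) = (a + (m:ℕ)) + 1 := by omega
      rw [h2]
      exact hedge _
  exact hprodne hzero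

/-- If every cyclic product of entries of an `n×n` matrix `A` over pairwise
distinct indices vanishes, then there exist pairwise distinct rows
`π 0, π 1, …` such that row `π j` contains at least `j+1` zero entries
(i.e. for each `j ∈ {1,…,n}` there is a row with at least `j` zeros, and
these rows are pairwise distinct). -/
theorem stmt5 {K : Type*} [Field K] {n : ℕ}
    (A : Matrix (Fin n) (Fin n) K)
    (hcyc : ∀ (k : ℕ) (i : Fin (k + 1) → Fin n), Function.Injective i →
      ∏ m : Fin (k + 1), A (i m) (i (m + 1)) = 0) :
    ∃ π : Fin n → Fin n, Function.Injective π ∧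
      ∀ j : Fin n,
        (j : ℕ) + 1 ≤ (Finset.univ.filter fun c : Fin n => A (π j) c = 0).card := by
  rcases Nat.eq_zero_or_pos n with hn | hn
  · subst hn
    exact ⟨id, Function.injective_id, fun j => j.elim0⟩
  set i0 : Fin n := ⟨0, hn⟩ with hi0
  set sk : Finset (Fin n) → Fin n := fun s =>
    if h : ∃ v ∈ s, ∀ w ∈ s, A v w = 0 then h.choose else i0 with hskdef
  have hsk : ∀ s : Finset (Fin n), s.Nonempty →
      sk s ∈ s ∧ ∀ w ∈ s, A (sk s) w = 0 := by
    intro s hs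
    have h := sink_exists A hcyc s hs
    simp only [hskdef, dif_pos h]
    exact ⟨h.choose_spec.1, h.choose_spec.2⟩
  set rem : ℕ → Finset (Fin n) := fun m =>
    Nat.rec Finset.univ (fun _ t => t \ {sk t}) m with hremdef
  have hsucc : ∀ m, rem (m+1) = rem m \ {sk (rem m)} := fun m => rfl
  have hcard : ∀ m, m ≤ n → (rem m).card = n - m := by
    intro m
    induction m with
    | zero => intro _; simp [hremdef]
    | succ m ih =>
      intro hm
      have hm' : m ≤ n := by omega
      have hc := ih hm'
      have hne : (rem m).Nonempty := by
        rw [← Finset.card_pos, hc]; omega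
      have hmem : {sk (rem m)} ⊆ rem m := by
        simp [Finset.singleton_subset_iff]; exact (hsk _ hne).1
      rw [hsucc, Finset.card_sdiff_of_subset hmem, hc, Finset.card_singleton]
      omega
  have hmono : ∀ m m', m ≤ m' → rem m' ⊆ rem m := by
    intro m m' h
    induction m' with
    | zero => have : m = 0 := by omega
              subst this; exact fun x hx => hx
    | succ m' ih =>
      rcases Nat.eq_or_lt_of_le h with h' | h'
      · subst h'; exact fun x hx => hx
      · have : m ≤ m' := by omega
        exact fun x hx => ih this (by rw [hsucc] at hx; exact (Finset.mem_sdiff.1 hx).1)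
  set π : Fin n → Fin n := fun j => sk (rem (n - 1 - j.val)) with hπdef
  have hrem : ∀ j : Fin n, (rem (n - 1 - j.val)).card = j.val + 1 := by
    intro j
    have hj := j.isLt
    rw [hcard (n - 1 - j.val) (by omega)]
    omega
  have hremne : ∀ j : Fin n, (rem (n - 1 - j.val)).Nonempty := by
    intro j
    rw [← Finset.card_pos, hrem j]
    omega
  have key : ∀ j1 j2 : Fin n, j1.val < j2.val → π j1 ≠ π j2 := by
    intro j1 j2 hlt heq
    have hj2 := j2.isLt
    set m1 := n - 1 - j1.val
    set m2 := n - 1 - j2.val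
    have hm : m2 + 1 ≤ m1 := by omega
    have h1 : π j1 ∈ rem m1 := (hsk _ (hremne j1)).1
    have h2 : π j1 ∈ rem (m2 + 1) := hmono _ _ hm h1
    rw [hsucc] at h2
    have := (Finset.mem_sdiff.1 h2).2
    apply this
    simp only [Finset.mem_singleton]
    exact heq
  refine ⟨π, ?_, ?_⟩
  · intro j1 j2 heq
    by_contra hne
    have hne' : j1.val ≠ j2.val := fun h => hne (Fin.ext h)
    rcases Nat.lt_or_ge j1.val j2.val with h | h
    · exact key j1 j2 h heq
    · exact key j2 j1 (by omega) heq.symm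
  · intro j
    rw [← hrem j]
    apply Finset.card_le_card
    intro c hc
    simp only [Finset.mem_filter, Finset.mem_univ, true_and]
    exact (hsk _ (hremne j)).2 c hc
end

section
/- Let A be an n×n matrix over a field such that every cyclic product a_{i_1 i_2} ⋯ a_{i_k i_1} over pairwise distinct indices vanishes. Then there exists a permutation σ of {1,...,n} such that the matrix B with b_{ij} = a_{σ(i) σ(j)} is strictly upper triangular (b_{ij} = 0 whenever i ≥ j). -/
/-- If every cyclic product vanishes, some row of `A` is entirely zero. -/
lemma exists_zero_row {K : Type*} [Field K] {n : ℕ}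
    (A : Matrix (Fin (n + 1)) (Fin (n + 1)) K)
    (hcyc : ∀ (k : ℕ) (i : Fin (k + 1) → Fin (n + 1)), Function.Injective i →
      ∏ m : Fin (k + 1), A (i m) (i (m + 1)) = 0) :
    ∃ v, ∀ j, A v j = 0 := by
  by_contra h
  push_neg at h
  choose f hf using h
  set g : ℕ → Fin (n + 1) := fun t => f^[t] 0 with hg
  have hgsucc : ∀ t, g (t + 1) = f (g t) := fun t => Function.iterate_succ_apply' f t 0
  -- pigeonhole: g is not injective on Fin (n+2)
  have hni : ¬ Function.Injective (fun t : Fin (n + 2) => g t.val) := by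
    intro hinj
    have := Fintype.card_le_of_injective _ hinj
    simp at this
  rw [Function.not_injective_iff] at hni
  obtain ⟨a₀, b₀, hgab₀, hne₀⟩ := hni
  have hP : ∃ b : ℕ, ∃ a, a < b ∧ g a = g b := by
    rcases lt_or_gt_of_ne hne₀ with hlt | hlt
    · exact ⟨b₀.val, a₀.val, hlt, hgab₀⟩
    · exact ⟨a₀.val, b₀.val, hlt, hgab₀.symm⟩
  set b := Nat.find hP with hbdef
  obtain ⟨a, hab, hgab⟩ := Nat.find_spec hP
  have hmin : ∀ c d : ℕ, c < d → d < b → g c ≠ g d := by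
    intro c d hcd hdb hgcd
    exact Nat.find_min hP hdb ⟨c, hcd, hgcd⟩
  obtain ⟨k, hk⟩ : ∃ k, b = a + k + 1 := ⟨b - a - 1, by omega⟩
  set i : Fin (k + 1) → Fin (n + 1) := fun m => g (a + m.val) with hi
  have hinj : Function.Injective i := by
    intro m m' hmm'
    by_contra hne
    have hvne : m.val ≠ m'.val := fun h => hne (Fin.ext h)
    rcases lt_or_gt_of_ne hvne with h | h
    · exact hmin (a + m.val) (a + m'.val) (by omega) (by omega) hmm'
    · exact hmin (a + m'.val) (a + m.val) (by omega) (by omega) hmm'.symm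
  have := hcyc k i hinj
  rw [Finset.prod_eq_zero_iff] at this
  obtain ⟨m, -, hm0⟩ := this
  have hstep : i (m + 1) = f (g (a + m.val)) := by
    rw [← hgsucc]
    show g (a + (m + 1).val) = g (a + m.val + 1)
    have hmod : (m + 1).val = (m.val + 1) % (k + 1) := by
      simp [Fin.add_def]
    rcases eq_or_lt_of_le (Nat.lt_succ_iff.mp m.isLt) with hml | hml
    · have h1 : (m + 1).val = 0 := by
        rw [hmod, hml, Nat.mod_self]
      rw [h1]
      have h2 : a + m.val + 1 = b := by omega
      rw [h2]
      simpa using hgab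
    · have h1 : (m + 1).val = m.val + 1 := by
        rw [hmod, Nat.mod_eq_of_lt (by omega)]
      rw [h1, ← Nat.add_assoc]
  apply hf (g (a + m.val))
  rw [← hstep]
  exact hm0

/-- If every cyclic product of entries of an `n×n` matrix `A` over pairwise
distinct indices vanishes, then there is a permutation `σ` of the indices such
that `B i j = A (σ i) (σ j)` is strictly upper triangular. -/
theorem stmt6 {K : Type*} [Field K] {n : ℕ}
    (A : Matrix (Fin n) (Fin n) K)
    (hcyc : ∀ (k : ℕ) (i : Fin (k + 1) → Fin n), Function.Injective i →
      ∏ m : Fin (k + 1), A (i m) (i (m + 1)) = 0) :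
    ∃ σ : Equiv.Perm (Fin n), ∀ i j : Fin n, j ≤ i → A (σ i) (σ j) = 0 := by
  induction n with
  | zero => exact ⟨1, fun i j _ => i.elim0⟩
  | succ n ih =>
    obtain ⟨v, hv⟩ := exists_zero_row A hcyc
    set A' : Matrix (Fin n) (Fin n) K := fun i j => A (v.succAbove i) (v.succAbove j) with hA'
    have hcyc' : ∀ (k : ℕ) (i : Fin (k + 1) → Fin n), Function.Injective i →
        ∏ m : Fin (k + 1), A' (i m) (i (m + 1)) = 0 := by
      intro k i hinj
      exact hcyc k (fun m => v.succAbove (i m))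
        (Fin.succAbove_right_injective.comp hinj)
    obtain ⟨σ', hσ'⟩ := ih A' hcyc'
    refine ⟨finSuccEquivLast.trans ((Equiv.optionCongr σ').trans (finSuccEquiv' v).symm),
      fun i j hji => ?_⟩
    induction i using Fin.lastCases with
    | last =>
      simp [finSuccEquivLast_last, finSuccEquiv'_symm_none]
      exact hv _
    | cast i' =>
      induction j using Fin.lastCases with
      | last => exact absurd hji (not_le.mpr (Fin.castSucc_lt_last i'))
      | cast j' =>
        have hji' : j' ≤ i' := Fin.castSucc_le_castSucc_iff.mp hji
        simp [finSuccEquivLast_castSucc, finSuccEquiv'_symm_some]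
        exact hσ' i' j' hji'
end

section
/- An evolution algebra whose structure matrix is strictly upper triangular is a nil algebra: every element has some vanishing right-normed power. -/
/-- An evolution algebra with strictly upper triangular structure matrix is a
nil algebra: every element has a vanishing right-normed power. -/
theorem stmt8 {K : Type*} [Field K] {E : Type*} [NonUnitalNonAssocRing E]
    [Module K E] [SMulCommClass K E E] [IsScalarTower K E E]
    {n : ℕ} (b : Module.Basis (Fin n) K E) (a : Matrix (Fin n) (Fin n) K)
    (hmul0 : ∀ i j, i ≠ j → b i * b j = 0)
    (hsq : ∀ i, b i * b i = ∑ k, a i k • b k)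
    (htri : ∀ i j : Fin n, j ≤ i → a i j = 0) :
    ∀ x : E, ∃ m : ℕ, rnpow x (m + 1) = 0 := by
  intro x
  have mulrepr : ∀ y z : E, ∀ k : Fin n,
      b.repr (y * z) k = ∑ i, (b.repr y i * b.repr z i) * a i k := by
    intro y z k
    conv_lhs => rw [← b.sum_repr y, ← b.sum_repr z]
    rw [Finset.sum_mul_sum]
    have h1 : ∀ i j : Fin n, (b.repr y i • b i) * (b.repr z j • b j)
        = (b.repr y i * b.repr z j) • (b i * b j) := by
      intro i j; rw [smul_mul_assoc, mul_smul_comm, smul_smul]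
    simp only [h1, map_sum, map_smul, Finsupp.coe_finset_sum, Finset.sum_apply,
      Finsupp.smul_apply, smul_eq_mul]
    refine Finset.sum_congr rfl ?_
    intro i _
    rw [Finset.sum_eq_single i]
    · rw [hsq i]
      simp [Finsupp.single_apply, Finset.sum_ite_eq', mul_comm]
    · intro j _ hji
      rw [hmul0 i j (Ne.symm hji)]; simp
    · simp
  have key : ∀ m : ℕ, ∀ k : Fin n, (k : ℕ) < m → b.repr (rnpow x m) k = 0 := by
    intro m
    induction m with
    | zero => intro k hk; omega
    | succ m ih =>
      intro k hk
      rw [show rnpow x (m + 1) = rnpow x m * x from rfl, mulrepr]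
      refine Finset.sum_eq_zero ?_
      intro i _
      by_cases hi : (i : ℕ) < m
      · rw [ih i hi]; ring
      · have : a i k = 0 := htri i k (by omega)
        rw [this, mul_zero]
  refine ⟨n, ?_⟩
  have hn : rnpow x n = 0 := by
    apply b.repr.injective
    ext k
    simpa using key n k k.isLt
  rw [show rnpow x (n + 1) = rnpow x n * x from rfl, hn, zero_mul]
end

section
/- Let E be a 3-dimensional evolution algebra with strictly upper triangular structure matrix A. Then E^3 = 0 if and only if a_{12} a_{23} = 0, where E^1 = E and E^k = Σ_{i=1}^{k-1} E^i E^{k-i}. -/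
variable (K : Type*) [Field K] (E : Type*) [NonUnitalNonAssocRing E]
  [Module K E] [SMulCommClass K E E] [IsScalarTower K E E]

/-- The span of the set of products `x*y` with `x ∈ P`, `y ∈ Q`. -/
def msMul (P Q : Submodule K E) : Submodule K E :=
  Submodule.span K {z : E | ∃ x ∈ P, ∃ y ∈ Q, z = x * y}

/-- Lower central series: `lcs K E 1 = E¹ = E`,
`lcs K E k = Eᵏ = ∑_{i=1}^{k-1} Eⁱ·E^{k-i}` for `k ≥ 2`. -/
def lcs : ℕ → Submodule K E
  | 0 => ⊥
  | 1 => ⊤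
  | (m + 2) => ⨆ i : Fin (m + 1), msMul K E (lcs (i.val + 1)) (lcs (m + 1 - i.val))
  termination_by k => k
  decreasing_by
  · have := i.isLt; omega
  · have := i.isLt; omega

/-- For a 3-dimensional evolution algebra with strictly upper triangular
structure matrix, `E³ = 0` iff `a₁₂ a₂₃ = 0`. -/
theorem stmt10 {K : Type*} [Field K] {E : Type*} [NonUnitalNonAssocRing E]
    [Module K E] [SMulCommClass K E E] [IsScalarTower K E E]
    (b : Module.Basis (Fin 3) K E) (a : Matrix (Fin 3) (Fin 3) K)
    (hmul0 : ∀ i j, i ≠ j → b i * b j = 0)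
    (hsq : ∀ i, b i * b i = ∑ k, a i k • b k)
    (htri : ∀ i j : Fin 3, j ≤ i → a i j = 0) :
    lcs K E 3 = ⊥ ↔ a 0 1 * a 1 2 = 0 := by
  have hlcs1 : lcs K E 1 = ⊤ := lcs.eq_2 K E
  have hlcs2 : lcs K E 2 = msMul K E (lcs K E 1) (lcs K E 1) := by
    rw [show (lcs K E 2) = _ from lcs.eq_3 K E 0]
    apply le_antisymm
    · apply iSup_le
      intro i
      have h0 : i = ⟨0, Nat.zero_lt_one⟩ := Fin.ext (by omega)
      subst h0
      exact le_rfl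
    · exact le_iSup
        (fun i : Fin (0 + 1) => msMul K E (lcs K E (i.val + 1)) (lcs K E (0 + 1 - i.val)))
        ⟨0, Nat.zero_lt_one⟩
  have hlcs3 : lcs K E 3
      = ⨆ i : Fin 2, msMul K E (lcs K E (i.val + 1)) (lcs K E (1 + 1 - i.val)) :=
    lcs.eq_3 K E 1
  have hlcs2' : lcs K E 2 = msMul K E ⊤ ⊤ := by rw [hlcs2, hlcs1]
  -- basic squares
  have h00 : b 0 * b 0 = a 0 1 • b 1 + a 0 2 • b 2 := by
    rw [hsq, Fin.sum_univ_three, htri 0 0 le_rfl, zero_smul, zero_add]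
  have h11 : b 1 * b 1 = a 1 2 • b 2 := by
    rw [hsq, Fin.sum_univ_three, htri 1 0 (by decide), htri 1 1 le_rfl, zero_smul,
      zero_smul, zero_add, zero_add]
  have h22 : b 2 * b 2 = 0 := by
    rw [hsq, Fin.sum_univ_three, htri 2 0 (by decide), htri 2 1 (by decide),
      htri 2 2 le_rfl]
    simp
  -- mul by b2 is zero
  have hb2l : ∀ y : E, b 2 * y = 0 := by
    intro y
    have h : (⊤ : Submodule K E) ≤ LinearMap.ker (LinearMap.mulLeft K (b 2)) := by
      rw [← b.span_eq]
      apply Submodule.span_le.mpr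
      rintro _ ⟨j, rfl⟩
      simp only [SetLike.mem_coe, LinearMap.mem_ker, LinearMap.mulLeft_apply]
      by_cases hj : (2 : Fin 3) = j
      · rw [← hj]; exact h22
      · exact hmul0 2 j hj
    exact h trivial
  have hb2r : ∀ y : E, y * b 2 = 0 := by
    intro y
    have h : (⊤ : Submodule K E) ≤ LinearMap.ker (LinearMap.mulRight K (b 2)) := by
      rw [← b.span_eq]
      apply Submodule.span_le.mpr
      rintro _ ⟨j, rfl⟩
      simp only [SetLike.mem_coe, LinearMap.mem_ker, LinearMap.mulRight_apply]
      by_cases hj : j = (2 : Fin 3)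
      · rw [hj]; exact h22
      · exact hmul0 j 2 hj
    exact h trivial
  -- mul by b1
  have hb1l : ∀ y : E, b 1 * y = (b.repr y 1) • (a 1 2 • b 2) := by
    intro y
    have h : LinearMap.mulLeft K (b 1) = (b.coord 1).smulRight (a 1 2 • b 2) := by
      apply b.ext
      intro j
      by_cases hj : (1 : Fin 3) = j
      · rw [← hj]
        simp [h11]
      · have hj' : j ≠ 1 := fun h => hj h.symm
        rw [LinearMap.mulLeft_apply, hmul0 1 j hj]
        simp [Module.Basis.repr_self, Finsupp.single_apply, hj']
    simpa using LinearMap.congr_fun h y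
  have hb1r : ∀ y : E, y * b 1 = (b.repr y 1) • (a 1 2 • b 2) := by
    intro y
    have h : LinearMap.mulRight K (b 1) = (b.coord 1).smulRight (a 1 2 • b 2) := by
      apply b.ext
      intro j
      by_cases hj : j = (1 : Fin 3)
      · rw [hj]
        simp [h11]
      · rw [LinearMap.mulRight_apply, hmul0 j 1 hj]
        simp [Module.Basis.repr_self, Finsupp.single_apply, hj]
    simpa using LinearMap.congr_fun h y
  -- W : products land in span {a01•b1 + a02•b2, b2}
  set W : Submodule K E := Submodule.span K {a 0 1 • b 1 + a 0 2 • b 2, b 2} with hW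
  have hgen1 : a 0 1 • b 1 + a 0 2 • b 2 ∈ W := Submodule.subset_span (by simp)
  have hgen2 : b 2 ∈ W := Submodule.subset_span (by simp)
  have hsqW : ∀ i : Fin 3, b i * b i ∈ W := by
    intro i
    by_cases h0 : i = 0
    · rw [h0, h00]; exact hgen1
    by_cases h1 : i = 1
    · rw [h1, h11]; exact Submodule.smul_mem _ _ hgen2
    have h2 : i = 2 := by omega
    rw [h2, h22]; exact Submodule.zero_mem _
  have hprodW : ∀ u v : E, u * v ∈ W := by
    have h1 : ∀ (i : Fin 3) (v : E), b i * v ∈ W := by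
      intro i v
      have h : (⊤ : Submodule K E) ≤ Submodule.comap (LinearMap.mulLeft K (b i)) W := by
        rw [← b.span_eq]
        apply Submodule.span_le.mpr
        rintro _ ⟨j, rfl⟩
        simp only [SetLike.mem_coe, Submodule.mem_comap, LinearMap.mulLeft_apply]
        by_cases hij : i = j
        · rw [← hij]; exact hsqW i
        · rw [hmul0 i j hij]; exact Submodule.zero_mem _
      exact h trivial
    intro u v
    have h : (⊤ : Submodule K E) ≤ Submodule.comap (LinearMap.mulRight K v) W := by
      rw [← b.span_eq]
      apply Submodule.span_le.mpr
      rintro _ ⟨j, rfl⟩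
      exact h1 j v
    exact h trivial
  -- T : the target span
  set T : Submodule K E := Submodule.span K {(a 0 1 * a 1 2) • b 2} with hT
  have hTel : (a 0 1 * a 1 2) • b 2 ∈ T := Submodule.subset_span rfl
  -- products of W elements with anything land in T
  have hWl : ∀ w ∈ W, ∀ y : E, w * y ∈ T := by
    intro w hw y
    induction hw using Submodule.span_induction with
    | mem z hz =>
      rcases hz with hz | hz
      · subst hz
        rw [add_mul, smul_mul_assoc, smul_mul_assoc, hb1l, hb2l, smul_zero, add_zero]
        have he : a 0 1 • ((b.repr y 1) • (a 1 2 • b 2))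
            = (b.repr y 1) • ((a 0 1 * a 1 2) • b 2) := by
          simp only [smul_smul]; congr 1; ring
        rw [he]
        exact Submodule.smul_mem _ _ hTel
      · simp only [Set.mem_singleton_iff] at hz
        subst hz
        rw [hb2l]; exact Submodule.zero_mem _
    | zero => rw [zero_mul]; exact Submodule.zero_mem _
    | add u v _ _ hu hv => rw [add_mul]; exact Submodule.add_mem _ hu hv
    | smul c u _ hu => rw [smul_mul_assoc]; exact Submodule.smul_mem _ _ hu
  have hWr : ∀ w ∈ W, ∀ y : E, y * w ∈ T := by
    intro w hw y
    induction hw using Submodule.span_induction with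
    | mem z hz =>
      rcases hz with hz | hz
      · subst hz
        rw [mul_add, mul_smul_comm, mul_smul_comm, hb1r, hb2r, smul_zero, add_zero]
        have he : a 0 1 • ((b.repr y 1) • (a 1 2 • b 2))
            = (b.repr y 1) • ((a 0 1 * a 1 2) • b 2) := by
          simp only [smul_smul]; congr 1; ring
        rw [he]
        exact Submodule.smul_mem _ _ hTel
      · simp only [Set.mem_singleton_iff] at hz
        subst hz
        rw [hb2r]; exact Submodule.zero_mem _
    | zero => rw [mul_zero]; exact Submodule.zero_mem _
    | add u v _ _ hu hv => rw [mul_add]; exact Submodule.add_mem _ hu hv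
    | smul c u _ hu => rw [mul_smul_comm]; exact Submodule.smul_mem _ _ hu
  -- the two pieces of lcs 3
  have hA : msMul K E (lcs K E 2) ⊤ ≤ T := by
    apply Submodule.span_le.mpr
    rintro _ ⟨x, hx, y, -, rfl⟩
    rw [hlcs2'] at hx
    induction hx using Submodule.span_induction with
    | mem z hz =>
      rcases hz with ⟨u, -, v, -, rfl⟩
      exact hWl _ (hprodW u v) y
    | zero => rw [zero_mul]; exact Submodule.zero_mem _
    | add u v _ _ hu hv => rw [add_mul]; exact Submodule.add_mem _ hu hv
    | smul c u _ hu => rw [smul_mul_assoc]; exact Submodule.smul_mem _ _ hu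
  have hB : msMul K E ⊤ (lcs K E 2) ≤ T := by
    apply Submodule.span_le.mpr
    rintro _ ⟨x, -, y, hy, rfl⟩
    rw [hlcs2'] at hy
    induction hy using Submodule.span_induction with
    | mem z hz =>
      rcases hz with ⟨u, -, v, -, rfl⟩
      exact hWr _ (hprodW u v) x
    | zero => rw [mul_zero]; exact Submodule.zero_mem _
    | add u v _ _ hu hv => rw [mul_add]; exact Submodule.add_mem _ hu hv
    | smul c u _ hu => rw [mul_smul_comm]; exact Submodule.smul_mem _ _ hu
  -- lcs 3 ≤ T
  have h3le : lcs K E 3 ≤ T := by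
    rw [hlcs3]
    apply iSup_le
    intro i
    fin_cases i
    · show msMul K E (lcs K E 1) (lcs K E 2) ≤ T
      rw [hlcs1]; exact hB
    · show msMul K E (lcs K E 2) (lcs K E 1) ≤ T
      rw [hlcs1]; exact hA
  -- the witness element in lcs 3
  have hwit : (a 0 1 * a 1 2) • b 2 ∈ lcs K E 3 := by
    have e1 : (b 0 * b 0) * b 1 = (a 0 1 * a 1 2) • b 2 := by
      rw [h00, add_mul, smul_mul_assoc, smul_mul_assoc, h11, hmul0 2 1 (by decide),
        smul_zero, add_zero, smul_smul]
    have hm2 : b 0 * b 0 ∈ lcs K E 2 := by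
      rw [hlcs2']
      exact Submodule.subset_span ⟨b 0, trivial, b 0, trivial, rfl⟩
    have hm3 : (b 0 * b 0) * b 1 ∈ msMul K E (lcs K E 2) (lcs K E 1) := by
      apply Submodule.subset_span
      exact ⟨b 0 * b 0, hm2, b 1, by rw [hlcs1]; trivial, rfl⟩
    rw [← e1, hlcs3]
    have := le_iSup
      (fun i : Fin 2 => msMul K E (lcs K E (i.val + 1)) (lcs K E (1 + 1 - i.val))) 1
    exact this hm3
  constructor
  · intro h0
    rw [h0] at hwit
    rcases smul_eq_zero.mp (Submodule.mem_bot K |>.mp hwit) with h | h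
    · exact h
    · exact absurd h (b.ne_zero 2)
  · intro h0
    apply le_bot_iff.mp
    refine h3le.trans ?_
    rw [hT, h0, zero_smul, Submodule.span_zero_singleton]
end

section
/- Let E be a 4-dimensional evolution algebra with strictly upper triangular structure matrix A. Then E^3 = 0 if and only if a_{12}a_{23} = 0, a_{12}a_{24} = 0, a_{13}a_{34} = 0 and a_{23}a_{34} = 0. -/
variable (K : Type*) [Field K] (E : Type*) [NonUnitalNonAssocRing E]
  [Module K E] [SMulCommClass K E E] [IsScalarTower K E E]

set_option linter.unusedSectionVars false in
lemma my_lcs1 : lcs K E 1 = ⊤ := by rw [lcs]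

lemma my_lcs2 : lcs K E 2 = msMul K E ⊤ ⊤ := by
  rw [show (2:ℕ) = 0 + 2 from rfl, lcs]
  simp [iSup_unique, my_lcs1]

lemma my_lcs3 : lcs K E 3 = msMul K E ⊤ (msMul K E ⊤ ⊤) ⊔ msMul K E (msMul K E ⊤ ⊤) ⊤ := by
  rw [show (3:ℕ) = 1 + 2 from rfl, lcs]
  have h0 : ∀ i : Fin 2, msMul K E (lcs K E (i.val + 1)) (lcs K E (2 - i.val)) ≤
      msMul K E ⊤ (msMul K E ⊤ ⊤) ⊔ msMul K E (msMul K E ⊤ ⊤) ⊤ := by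
    intro i
    fin_cases i
    · simp only [Fin.val_zero]; norm_num [my_lcs1, my_lcs2]
    · simp only [Fin.val_one]; norm_num [my_lcs1, my_lcs2]
  apply le_antisymm (iSup_le h0)
  apply sup_le
  · have := le_iSup (fun i : Fin 2 => msMul K E (lcs K E (i.val + 1)) (lcs K E (2 - i.val))) 0
    simpa [my_lcs1, my_lcs2] using this
  · have := le_iSup (fun i : Fin 2 => msMul K E (lcs K E (i.val + 1)) (lcs K E (2 - i.val))) 1
    simpa [my_lcs1, my_lcs2] using this

/-- For a 4-dimensional evolution algebra with strictly upper triangular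
structure matrix, `E³ = 0` iff
`a₁₂a₂₃ = a₁₂a₂₄ = a₁₃a₃₄ = a₂₃a₃₄ = 0`. -/
theorem stmt11 {K : Type*} [Field K] {E : Type*} [NonUnitalNonAssocRing E]
    [Module K E] [SMulCommClass K E E] [IsScalarTower K E E]
    (b : Module.Basis (Fin 4) K E) (a : Matrix (Fin 4) (Fin 4) K)
    (hmul0 : ∀ i j, i ≠ j → b i * b j = 0)
    (hsq : ∀ i, b i * b i = ∑ k, a i k • b k)
    (htri : ∀ i j : Fin 4, j ≤ i → a i j = 0) :
    lcs K E 3 = ⊥ ↔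
      a 0 1 * a 1 2 = 0 ∧ a 0 1 * a 1 3 = 0 ∧
      a 0 2 * a 2 3 = 0 ∧ a 1 2 * a 2 3 = 0 := by
  -- basic multiplication facts
  have L1 : ∀ (i : Fin 4) (z : E), b i * z = b.repr z i • (b i * b i) := by
    intro i z
    conv_lhs => rw [← b.sum_repr z]
    rw [Finset.mul_sum]
    rw [Finset.sum_eq_single i]
    · rw [mul_smul_comm]
    · intro j _ hj
      rw [mul_smul_comm, hmul0 i j (Ne.symm hj), smul_zero]
    · intro h; exact absurd (Finset.mem_univ i) h
  have L2 : ∀ (i : Fin 4) (z : E), z * b i = b.repr z i • (b i * b i) := by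
    intro i z
    conv_lhs => rw [← b.sum_repr z]
    rw [Finset.sum_mul]
    rw [Finset.sum_eq_single i]
    · rw [smul_mul_assoc]
    · intro j _ hj
      rw [smul_mul_assoc, hmul0 j i hj, smul_zero]
    · intro h; exact absurd (Finset.mem_univ i) h
  have hrepr : ∀ i k, b.repr (b i * b i) k = a i k := by
    intro i k
    rw [hsq i]
    simp [Finsupp.single_apply, Module.Basis.repr_self]
  constructor
  · -- forward
    intro h
    have key : ∀ i k m : Fin 4, a i k * a k m = 0 := by
      intro i k m
      have hmem : (b i * b i) * b k ∈ lcs K E 3 := by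
        rw [my_lcs3]
        apply Submodule.mem_sup_right
        apply Submodule.subset_span
        exact ⟨b i * b i, Submodule.subset_span ⟨b i, trivial, b i, trivial, rfl⟩,
          b k, trivial, rfl⟩
      rw [h, Submodule.mem_bot] at hmem
      have hexp : (b i * b i) * b k = ∑ m, (a i k * a k m) • b m := by
        rw [L2 k (b i * b i), hrepr i k, hsq k, Finset.smul_sum]
        refine Finset.sum_congr rfl fun m _ => ?_
        rw [smul_smul]
      rw [hexp] at hmem
      exact Fintype.linearIndependent_iff.mp b.linearIndependent _ hmem m
    exact ⟨key 0 1 2, key 0 1 3, key 0 2 3, key 1 2 3⟩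
  · -- backward
    rintro ⟨h1, h2, h3, h4⟩
    have key : ∀ i k m : Fin 4, a i k * a k m = 0 := by
      intro i k m
      by_cases hik : i < k
      · by_cases hkm : k < m
        · clear L1 L2 hrepr hsq hmul0
          fin_cases i <;> fin_cases k <;> fin_cases m <;>
            first
              | exact absurd hik (by decide)
              | exact absurd hkm (by decide)
              | exact h1 | exact h2 | exact h3 | exact h4
        · rw [htri k m (not_lt.mp hkm), mul_zero]
      · rw [htri i k (not_lt.mp hik), zero_mul]
    -- squares annihilate everything
    have sqL : ∀ (i : Fin 4) (z : E), (b i * b i) * z = 0 := by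
      intro i z
      rw [hsq i, Finset.sum_mul]
      apply Finset.sum_eq_zero
      intro l _
      rw [smul_mul_assoc, L1 l z, hsq l, Finset.smul_sum, Finset.smul_sum]
      apply Finset.sum_eq_zero
      intro m _
      rw [smul_smul, smul_smul]
      have : a i l * b.repr z l * a l m = b.repr z l * (a i l * a l m) := by ring
      rw [this, key, mul_zero, zero_smul]
    have sqR : ∀ (i : Fin 4) (z : E), z * (b i * b i) = 0 := by
      intro i z
      rw [hsq i, Finset.mul_sum]
      apply Finset.sum_eq_zero
      intro l _
      rw [mul_smul_comm, L2 l z, hsq l, Finset.smul_sum, Finset.smul_sum]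
      apply Finset.sum_eq_zero
      intro m _
      rw [smul_smul, smul_smul]
      have : a i l * b.repr z l * a l m = b.repr z l * (a i l * a l m) := by ring
      rw [this, key, mul_zero, zero_smul]
    have hxy : ∀ x y : E, x * y = ∑ i, b.repr y i • (b.repr x i • (b i * b i)) := by
      intro x y
      conv_lhs => rw [← b.sum_repr y]
      rw [Finset.mul_sum]
      refine Finset.sum_congr rfl fun i _ => ?_
      rw [mul_smul_comm, L2 i x]
    have tripL : ∀ x y z : E, (x * y) * z = 0 := by
      intro x y z
      rw [hxy x y, Finset.sum_mul]
      apply Finset.sum_eq_zero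
      intro i _
      rw [smul_mul_assoc, smul_mul_assoc, sqL i z, smul_zero, smul_zero]
    have tripR : ∀ x y z : E, z * (x * y) = 0 := by
      intro x y z
      rw [hxy x y, Finset.mul_sum]
      apply Finset.sum_eq_zero
      intro i _
      rw [mul_smul_comm, mul_smul_comm, sqR i z, smul_zero, smul_zero]
    rw [my_lcs3, sup_eq_bot_iff]
    constructor
    · rw [msMul, Submodule.span_eq_bot]
      rintro z ⟨x, -, y, hy, rfl⟩
      have hker : msMul K E ⊤ ⊤ ≤ LinearMap.ker (LinearMap.mulLeft K x) := by
        rw [msMul, Submodule.span_le]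
        rintro w ⟨u, -, v, -, rfl⟩
        simp only [SetLike.mem_coe, LinearMap.mem_ker, LinearMap.mulLeft_apply]
        exact tripR u v x
      simpa using hker hy
    · rw [msMul, Submodule.span_eq_bot]
      rintro z ⟨x, hx, y, -, rfl⟩
      have hker : msMul K E ⊤ ⊤ ≤ LinearMap.ker (LinearMap.mulRight K y) := by
        rw [msMul, Submodule.span_le]
        rintro w ⟨u, -, v, -, rfl⟩
        simp only [SetLike.mem_coe, LinearMap.mem_ker, LinearMap.mulRight_apply]
        exact tripL u v y
      simpa using hker hx
end

section
/- The 2-dimensional complex evolution algebras E_2 (e_1² = e_1, e_2² = e_1) and E_3 (e_1² = e_1 + e_2, e_2² = -e_1 - e_2) are not isomorphic as algebras. -/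
/-- The 2-dimensional complex evolution algebras
`E₂` (`e₁² = e₁`, `e₂² = e₁`) and `E₃` (`e₁² = e₁ + e₂`, `e₂² = -e₁ - e₂`),
both with `e₁e₂ = e₂e₁ = 0`, are not isomorphic as algebras. -/
theorem stmt14 {E F : Type*} [NonUnitalNonAssocRing E] [NonUnitalNonAssocRing F]
    [Module ℂ E] [SMulCommClass ℂ E E] [IsScalarTower ℂ E E]
    [Module ℂ F] [SMulCommClass ℂ F F] [IsScalarTower ℂ F F]
    (b : Module.Basis (Fin 2) ℂ E) (c : Module.Basis (Fin 2) ℂ F)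
    (hb01 : b 0 * b 1 = 0) (hb10 : b 1 * b 0 = 0)
    (hb0 : b 0 * b 0 = b 0) (hb1 : b 1 * b 1 = b 0)
    (hc01 : c 0 * c 1 = 0) (hc10 : c 1 * c 0 = 0)
    (hc0 : c 0 * c 0 = c 0 + c 1) (hc1 : c 1 * c 1 = -(c 0 + c 1)) :
    ¬ ∃ φ : E ≃ₗ[ℂ] F, ∀ x y : E, φ (x * y) = φ x * φ y := by
  rintro ⟨φ, hφ⟩
  -- In F, (c 0 + c 1)² = 0
  have hsum : (c 0 + c 1) * (c 0 + c 1) = 0 := by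
    rw [add_mul, mul_add, mul_add, hc0, hc01, hc10, hc1]
    abel
  -- Every square in F is a multiple of c 0 + c 1
  have key : ∀ y : F, (y * y) * (y * y) = 0 := by
    intro y
    have hy : y = c.repr y 0 • c 0 + c.repr y 1 • c 1 := by
      have := c.sum_repr y
      rw [Fin.sum_univ_two] at this
      exact this.symm
    set a := c.repr y 0 with ha
    set d := c.repr y 1 with hd
    have h1 : y * y = (a * a - d * d) • (c 0 + c 1) := by
      rw [hy]
      simp only [add_mul, mul_add, smul_mul_assoc, mul_smul_comm, hc0, hc01, hc10,
        hc1, smul_smul, smul_zero, smul_neg, sub_smul]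
      module
    rw [h1, smul_mul_smul_comm, hsum, smul_zero]
  -- But in E, (b 0 * b 0) * (b 0 * b 0) = b 0 ≠ 0
  have h2 : φ (b 0) = 0 := by
    have h := key (φ (b 0))
    rw [← hφ, ← hφ, hb0] at h
    rwa [hb0] at h
  exact b.ne_zero 0 (φ.injective (by rw [h2, map_zero]))
end

section
/- For a_4 ≠ 0 and a_4' ≠ 0, the 2-dimensional complex evolution algebras E_6(a_4) and E_6(a_4') given by e_1² = e_2, e_2² = e_1 + a_4 e_2 (resp. with a_4') are isomorphic via an evolution-basis-preserving isomorphism (i.e., one sending the natural basis to scalar multiples of natural basis elements) if and only if a_4'/a_4 is a cube root of unity. -/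
section Aux

variable {E F : Type*} [NonUnitalNonAssocRing E] [NonUnitalNonAssocRing F]
    [Module ℂ E] [SMulCommClass ℂ E E] [IsScalarTower ℂ E E]
    [Module ℂ F] [SMulCommClass ℂ F F] [IsScalarTower ℂ F F]

omit [SMulCommClass ℂ F F] [IsScalarTower ℂ F F] in
lemma stmt15_coeffs (c : Module.Basis (Fin 2) ℂ F) (p q r t : ℂ)
    (h : p • c 0 + q • c 1 = r • c 0 + t • c 1) : p = r ∧ q = t := by
  have h0 := congrArg (fun v => c.repr v 0) h
  have h1 := congrArg (fun v => c.repr v 1) h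
  simp [Module.Basis.repr_self, Finsupp.single_apply] at h0 h1
  exact ⟨h0, h1⟩

lemma stmt15_mul_basis (b : Module.Basis (Fin 2) ℂ E) (φ : E ≃ₗ[ℂ] F)
    (h : ∀ i j : Fin 2, φ (b i * b j) = φ (b i) * φ (b j)) :
    ∀ x y : E, φ (x * y) = φ x * φ y := by
  intro x y
  have hx := b.sum_repr x
  have hy := b.sum_repr y
  rw [Fin.sum_univ_two] at hx hy
  rw [← hx, ← hy]
  simp only [add_mul, mul_add, smul_mul_assoc, mul_smul_comm, map_add, map_smul, h]

end Aux

/-- For `a ≠ 0`, `a' ≠ 0`, the 2-dimensional complex evolution algebras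
`E₆(a)` (`e₁² = e₂`, `e₂² = e₁ + a e₂`) and `E₆(a')` are isomorphic via an
isomorphism sending the natural basis to scalar multiples of natural basis
elements iff `a'/a` is a cube root of unity. -/
theorem stmt15 {E F : Type*} [NonUnitalNonAssocRing E] [NonUnitalNonAssocRing F]
    [Module ℂ E] [SMulCommClass ℂ E E] [IsScalarTower ℂ E E]
    [Module ℂ F] [SMulCommClass ℂ F F] [IsScalarTower ℂ F F]
    (a a' : ℂ) (ha : a ≠ 0) (ha' : a' ≠ 0)
    (b : Module.Basis (Fin 2) ℂ E) (c : Module.Basis (Fin 2) ℂ F)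
    (hb01 : b 0 * b 1 = 0) (hb10 : b 1 * b 0 = 0)
    (hb0 : b 0 * b 0 = b 1) (hb1 : b 1 * b 1 = b 0 + a • b 1)
    (hc01 : c 0 * c 1 = 0) (hc10 : c 1 * c 0 = 0)
    (hc0 : c 0 * c 0 = c 1) (hc1 : c 1 * c 1 = c 0 + a' • c 1) :
    (∃ φ : E ≃ₗ[ℂ] F, (∀ x y : E, φ (x * y) = φ x * φ y) ∧
        ∃ σ : Equiv.Perm (Fin 2), ∀ i : Fin 2, ∃ s : ℂ, s ≠ 0 ∧ φ (b i) = s • c (σ i)) ↔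
      (a' / a) ^ 3 = 1 := by
  constructor
  · rintro ⟨φ, hmul, σ, hσ⟩
    obtain ⟨s0, hs0, hφ0⟩ := hσ 0
    obtain ⟨s1, hs1, hφ1⟩ := hσ 1
    have hcases : σ 0 = 0 ∨ σ 0 = 1 := by omega
    rcases hcases with h00 | h01
    · -- identity case
      have h11 : σ 1 = 1 := by
        have := σ.injective.ne (show (1 : Fin 2) ≠ 0 by decide)
        rw [h00] at this; omega
      rw [h00] at hφ0; rw [h11] at hφ1
      -- φ (b0 * b0) = φ(b0)^2
      have t1 := hmul (b 0) (b 0)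
      rw [hb0, hφ1, hφ0, smul_mul_assoc, mul_smul_comm, hc0, smul_smul] at t1
      have e1 : (0:ℂ) • c 0 + s1 • c 1 = (0:ℂ) • c 0 + (s0*s0) • c 1 := by
        simp only [zero_smul, zero_add]; exact t1
      obtain ⟨-, e1'⟩ := stmt15_coeffs c _ _ _ _ e1
      -- φ (b1 * b1) = φ(b1)^2
      have t2 := hmul (b 1) (b 1)
      rw [hb1, map_add, map_smul, hφ0, hφ1, smul_mul_assoc, mul_smul_comm,
        hc1, smul_smul, smul_smul] at t2
      have e2 : s0 • c 0 + (a*s1) • c 1 = (s1*s1) • c 0 + (s1*s1*a') • c 1 :=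
        t2.trans (by rw [smul_add, smul_smul])
      obtain ⟨e2a, e2b⟩ := stmt15_coeffs c _ _ _ _ e2
      -- s1 = s0^2, s0 = s1^2 ⇒ s0^3 = 1
      have h4 : s0 = s0 ^ 4 := by linear_combination e2a + (s1 + s0^2) * e1'
      have hz : s0 * (s0 ^ 3 - 1) = 0 := by linear_combination -h4
      have hs03 : s0 ^ 3 = 1 := by
        rcases mul_eq_zero.mp hz with h | h
        · exact absurd h hs0
        · linear_combination h
      have h5 : a * s0 ^ 2 = s0 ^ 4 * a' := by
        linear_combination e2b - a * e1' + a' * (s1 + s0^2) * e1'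
      have h6 : s0 ^ 4 = s0 := by linear_combination s0 * hs03
      rw [h6] at h5
      have h7 : s0 * a' = s0 * (a * s0) := by linear_combination -h5
      have ha'eq : a' = a * s0 := mul_left_cancel₀ hs0 h7
      rw [ha'eq, mul_comm, mul_div_assoc, div_self ha, mul_one]
      exact hs03
    · -- swap case: contradiction
      rw [h01] at hφ0
      have h10 : σ 1 = 0 := by
        have := σ.injective.ne (show (1 : Fin 2) ≠ 0 by decide)
        rw [h01] at this; omega
      rw [h10] at hφ1
      have t1 := hmul (b 0) (b 0)
      rw [hb0, hφ1, hφ0, smul_mul_assoc, mul_smul_comm, hc1, smul_smul] at t1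
      have e1 : s1 • c 0 + (0:ℂ) • c 1 = (s0*s0) • c 0 + (s0*s0*a') • c 1 := by
        rw [zero_smul, add_zero, t1, smul_add, smul_smul]
      obtain ⟨-, e1'⟩ := stmt15_coeffs c _ _ _ _ e1
      exact absurd e1'.symm (mul_ne_zero (mul_ne_zero hs0 hs0) ha')
  · intro h3
    set s : ℂ := a' / a with hs
    have hsne : s ≠ 0 := div_ne_zero ha' ha
    have hu0 : s * s ^ 2 = 1 := by linear_combination h3
    have hu0' : s ^ 2 * s = 1 := by linear_combination h3
    set w : Fin 2 → ℂˣ := ![⟨s, s^2, hu0, hu0'⟩, ⟨s^2, s, hu0', hu0⟩] with hw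
    set c' : Module.Basis (Fin 2) ℂ F := c.unitsSMul w with hc'
    set φ : E ≃ₗ[ℂ] F := b.equiv c' (Equiv.refl _) with hφ
    have hφi : ∀ i : Fin 2, φ (b i) = (w i : ℂ) • c i := by
      intro i
      rw [hφ, Module.Basis.equiv_apply, Equiv.refl_apply, hc', Module.Basis.unitsSMul_apply,
        Units.smul_def]
    have hφ0' : φ (b 0) = s • c 0 := by rw [hφi 0]; norm_num [hw]
    have hφ1' : φ (b 1) = (s^2) • c 1 := by rw [hφi 1]; norm_num [hw]
    refine ⟨φ, stmt15_mul_basis b φ ?_, Equiv.refl _, ?_⟩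
    · intro i j
      have i2 : i = 0 ∨ i = 1 := by omega
      have j2 : j = 0 ∨ j = 1 := by omega
      rcases i2 with rfl | rfl <;> rcases j2 with rfl | rfl
      · rw [hb0, hφ1', hφ0', smul_mul_assoc, mul_smul_comm, hc0, smul_smul]
        rw [show s * s = s^2 by ring]
      · rw [hb01, map_zero, hφ0', hφ1', smul_mul_assoc, mul_smul_comm, hc01,
          smul_zero, smul_zero]
      · rw [hb10, map_zero, hφ1', hφ0', smul_mul_assoc, mul_smul_comm, hc10,
          smul_zero, smul_zero]
      · rw [hb1, map_add, map_smul, hφ0', hφ1', smul_mul_assoc, mul_smul_comm, hc1]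
        simp only [smul_add, smul_smul]
        have hsa : s * a = a' := by rw [hs]; field_simp
        have k1 : s^2 * s^2 = s := by linear_combination s * h3
        have k2 : s^2 * (s^2 * a') = a * s^2 := by
          linear_combination (a * s^2) * h3 - s^4 * hsa
        rw [k1, k2]
    · intro i
      exact ⟨(w i : ℂ), (w i).ne_zero, (hφi i).trans (by rw [Equiv.refl_apply])⟩
end

section
/- Let E be a 2n-dimensional evolution algebra whose structure matrix A is block diagonal with 2×2 blocks ((a_k, b_k), (c_k, d_k)), and suppose det(A) ≠ 0. If φ: E → E is an algebra isomorphism whose images φ(e_i) again form a natural basis, then the matrix (α_{ij}) of φ has exactly one nonzero entry in each row and each column, i.e., φ is a scaled permutation matrix. -/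
/-- Let `E` be a `2n`-dimensional evolution algebra whose structure matrix `A`
is block diagonal with `2×2` blocks (entries `A i j` vanish unless `i`, `j`
lie in the same block `{2k, 2k+1}`), with `det A ≠ 0`.  If `φ : E → E` is an
algebra isomorphism whose images `φ(eᵢ)` again form a natural basis (pairwise
products vanish), then the matrix of `φ` has exactly one nonzero entry in each
row and in each column. -/
theorem stmt16 {K : Type*} [Field K] {E : Type*} [NonUnitalNonAssocRing E]
    [Module K E] [SMulCommClass K E E] [IsScalarTower K E E]
    {n : ℕ} (b : Module.Basis (Fin (2 * n)) K E) (A : Matrix (Fin (2 * n)) (Fin (2 * n)) K)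
    (hmul0 : ∀ i j, i ≠ j → b i * b j = 0)
    (hsq : ∀ i, b i * b i = ∑ k, A i k • b k)
    (hblock : ∀ i j : Fin (2 * n), i.val / 2 ≠ j.val / 2 → A i j = 0)
    (hdet : A.det ≠ 0)
    (φ : E ≃ₗ[K] E) (hφ : ∀ x y : E, φ (x * y) = φ x * φ y)
    (hnat : ∀ i j, i ≠ j → φ (b i) * φ (b j) = 0) :
    (∀ i, ∃! j, b.repr (φ (b i)) j ≠ 0) ∧
      (∀ j, ∃! i, b.repr (φ (b i)) j ≠ 0) := by
  classical
  -- the matrix of φ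
  set M : Matrix (Fin (2 * n)) (Fin (2 * n)) K :=
    fun i j => b.repr (φ (b i)) j with hMdef
  -- rows of M have pairwise disjoint supports
  have hdisj : ∀ i i' : Fin (2 * n), i ≠ i' → ∀ k, M i k * M i' k = 0 := by
    intro i i' hii
    have h1 : φ (b i) = ∑ k, M i k • b k := (b.sum_repr _).symm
    have h2 : φ (b i') = ∑ k, M i' k • b k := (b.sum_repr _).symm
    have h3 : (0 : E) = ∑ l, (Matrix.vecMul (fun k => M i k * M i' k) A) l • b l := by
      rw [← hnat i i' hii, h1, h2, Finset.sum_mul_sum]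
      have hterm : ∀ k ∈ Finset.univ, ∀ l ∈ Finset.univ,
          (M i k • b k) * (M i' l • b l) = (M i k * M i' l) • (b k * b l) := by
        intro k _ l _; rw [smul_mul_smul_comm]
      rw [Finset.sum_congr rfl (fun k hk => Finset.sum_congr rfl (hterm k hk))]
      have hdiag : ∀ k : Fin (2 * n),
          (∑ l, (M i k * M i' l) • (b k * b l)) = (M i k * M i' k) • (b k * b k) := by
        intro k
        refine Finset.sum_eq_single k (fun l _ hl => ?_) (fun h => absurd (Finset.mem_univ k) h)
        rw [hmul0 k l (Ne.symm hl), smul_zero]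
      rw [Finset.sum_congr rfl (fun k _ => hdiag k)]
      have : ∀ k : Fin (2 * n), (M i k * M i' k) • (b k * b k)
          = ∑ l, ((M i k * M i' k) * A k l) • b l := by
        intro k
        rw [hsq k, Finset.smul_sum]
        exact Finset.sum_congr rfl fun l _ => (smul_smul _ _ _)
      rw [Finset.sum_congr rfl (fun k _ => this k), Finset.sum_comm]
      refine Finset.sum_congr rfl fun l _ => ?_
      rw [← Finset.sum_smul]
      congr 1
    have hcoef : (Matrix.vecMul (fun k => M i k * M i' k) A) = 0 := by
      have hli := Fintype.linearIndependent_iff.mp b.linearIndependent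
        (fun l => (Matrix.vecMul (fun k => M i k * M i' k) A) l) h3.symm
      funext l; exact hli l
    have hv : (fun k => M i k * M i' k) = 0 := by
      have hunit : IsUnit A.det := isUnit_iff_ne_zero.mpr hdet
      have := congrArg (fun w => Matrix.vecMul w A⁻¹) hcoef
      simpa [Matrix.vecMul_vecMul, Matrix.mul_nonsing_inv A hunit,
        Matrix.vecMul_one, Matrix.zero_vecMul] using this
    intro k; exact congrFun hv k
  -- every row is nonzero
  have hrow : ∀ i, ∃ j, M i j ≠ 0 := by
    intro i
    by_contra h
    push_neg at h
    have : b.repr (φ (b i)) = 0 := Finsupp.ext fun j => h j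
    have hz : φ (b i) = 0 := by
      have := congrArg b.repr.symm this
      simpa using this
    have : b i = 0 := by
      have := congrArg φ.symm hz
      simpa using this
    exact b.ne_zero i this
  -- choose the nonzero position in each row
  choose g hg using hrow
  have hginj : Function.Injective g := by
    intro i i' h
    by_contra hne
    exact hg i (by
      have := hdisj i i' hne (g i)
      rcases mul_eq_zero.mp this with h0 | h0
      · exact h0
      · exact absurd (h ▸ h0) (hg i'))
  have hgsurj : Function.Surjective g := Finite.surjective_of_injective hginj
  constructor
  · intro i
    refine ⟨g i, hg i, ?_⟩
    intro j hj
    obtain ⟨i', hi'⟩ := hgsurj j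
    by_cases hii : i' = i
    · rw [← hi', hii]
    · exfalso
      have := hdisj i i' (Ne.symm hii) j
      rcases mul_eq_zero.mp this with h0 | h0
      · exact hj h0
      · exact hg i' (hi' ▸ h0)
  · intro j
    obtain ⟨i, hi⟩ := hgsurj j
    refine ⟨i, hi ▸ hg i, ?_⟩
    intro i' hi'
    by_contra hne
    have := hdisj i' i hne j
    rcases mul_eq_zero.mp this with h0 | h0
    · exact hi' h0
    · exact (hi ▸ hg i) h0
end
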